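/- arXiv:2005.12436 — 4 statements merged into one kernel-verified Lean document; each statement's English description precedes it below -/
import Mathlib

section
/- (Dimension of the sum in an (N,ℓ)-lattice) Fix an integer step size ℓ, a function N : ℤ → ℕ, integers t and i ≥ 1. Let V be a finite-dimensional vector space over a field k, let B be a basis of V, and let U_1, …, U_i be subspaces of V such that each U_j is the span of some subset B_j ⊆ B, and such that dim(⋂_{j∈I} U_j) = N(t - |I|·ℓ) for every nonempty subset I ⊆ {1,…,i}. Then dim(U_1 + ⋯ + U_i) = N(t) - Σ_{j=0}^{i} (-1)^j · C(i,j) · N(t - j·ℓ), i.e., dim(U_1 + ⋯ + U_i) = N(t) - (∇^i N)(t). -/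
/-- The backward difference operator with step size `ℓ`. -/
def bdiff (ℓ : ℤ) (f : ℤ → ℤ) : ℤ → ℤ := fun t => f t - f (t - ℓ)

/-- Dimension of the sum of the subspaces in an `(N, ℓ)`-lattice:
`dim (U_1 + ⋯ + U_i) = N t - (∇^i N) t`. -/
theorem dim_sum_N_ell_lattice (ℓ : ℤ) (N : ℤ → ℕ) (t : ℤ) (i : ℕ) (hi : 1 ≤ i)
    {k V : Type*} [Field k] [AddCommGroup V] [Module k V] [FiniteDimensional k V]
    {ι : Type*} (b : Module.Basis ι k V) (s : Fin i → Set ι)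
    (U : Fin i → Submodule k V)
    (hU : ∀ j, U j = Submodule.span k (⇑b '' s j))
    (hdim : ∀ I : Finset (Fin i), I.Nonempty →
      (Module.finrank k ↥(⨅ j ∈ I, U j) : ℤ) = N (t - (I.card : ℤ) * ℓ)) :
    (Module.finrank k ↥(⨆ j, U j) : ℤ) =
      (N t : ℤ) - ∑ j ∈ Finset.range (i + 1),
        (-1 : ℤ) ^ j * (i.choose j : ℤ) * (N (t - (j : ℤ) * ℓ) : ℤ) := by
  classical
  haveI : Fintype ι := FiniteDimensional.fintypeBasisIndex b
  -- finrank of span of a basis subset equals its cardinality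
  have spanrank : ∀ u : Set ι,
      Module.finrank k (Submodule.span k (⇑b '' u)) = u.toFinset.card := by
    intro u
    have hli : LinearIndependent k (fun x : (⇑b '' u) => (x : V)) :=
      LinearIndepOn.id_image (b.linearIndependent.comp _ Subtype.val_injective)
    rw [finrank_span_set_eq_card hli]
    rw [Set.toFinset_image]
    exact Finset.card_image_of_injective _ b.injective
  -- the sup
  have hsup : (⨆ j, U j) = Submodule.span k (⇑b '' ⋃ j, s j) := by
    rw [Set.image_iUnion, Submodule.span_iUnion]
    exact iSup_congr hU
  -- the infs
  have hinf : ∀ I : Finset (Fin i),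
      (⨅ j ∈ I, U j) = Submodule.span k (⇑b '' ⋂ j ∈ I, s j) := by
    intro I
    ext x
    simp only [Submodule.mem_iInf, hU, Module.Basis.mem_span_image]
    constructor
    · intro h
      exact Set.subset_iInter₂ h
    · intro h j hj
      exact h.trans (Set.biInter_subset_of_mem hj)
  set S : Fin i → Finset ι := fun j => (s j).toFinset with hS
  have hcardinf : ∀ (I : Finset (Fin i)) (hI : I.Nonempty),
      ((I.inf' hI S).card : ℤ) = N (t - (I.card : ℤ) * ℓ) := by
    intro I hI
    rw [← hdim I hI, hinf I, spanrank]
    congr 2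
    ext a
    simp [hS, Finset.inf'_eq_inf, Finset.mem_inf]
  -- LHS
  have hLHS : (Module.finrank k ↥(⨆ j, U j) : ℤ) =
      ((Finset.univ.biUnion S).card : ℤ) := by
    rw [hsup, spanrank]
    congr 2
    ext a
    simp [hS]
  rw [hLHS, Finset.inclusion_exclusion_card_biUnion]
  have hstep : (∑ I : (Finset.univ.powerset.filter (fun x : Finset (Fin i) => x.Nonempty)),
      (-1 : ℤ) ^ (I.1.card + 1) * ((I.1.inf' (Finset.mem_filter.1 I.2).2 S).card : ℤ))
      = ∑ I ∈ Finset.univ.powerset.filter (fun x : Finset (Fin i) => x.Nonempty),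
        (-1 : ℤ) ^ (I.card + 1) * N (t - (I.card : ℤ) * ℓ) := by
    rw [← Finset.sum_attach
      (Finset.univ.powerset.filter (fun x : Finset (Fin i) => x.Nonempty))
      (fun I => (-1 : ℤ) ^ (I.card + 1) * (N (t - (I.card : ℤ) * ℓ) : ℤ))]
    exact Finset.sum_congr rfl fun I _ => by
      rw [hcardinf I.1 (Finset.mem_filter.1 I.2).2]
  rw [hstep]
  -- remove filter: sum over powerset minus the empty set term
  have hfil : ∑ I ∈ (Finset.univ : Finset (Fin i)).powerset.filter (fun x => x.Nonempty),
      (-1 : ℤ) ^ (I.card + 1) * N (t - (I.card : ℤ) * ℓ)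
      = (∑ I ∈ (Finset.univ : Finset (Fin i)).powerset,
          (-1 : ℤ) ^ (I.card + 1) * N (t - (I.card : ℤ) * ℓ))
        - (-1 : ℤ) ^ (0 + 1) * N (t - (0 : ℤ) * ℓ) := by
    rw [eq_sub_iff_add_eq]
    rw [← Finset.sum_filter_add_sum_filter_not (Finset.univ : Finset (Fin i)).powerset
      (fun x => x.Nonempty) (fun I => (-1 : ℤ) ^ (I.card + 1) * N (t - (I.card : ℤ) * ℓ))]
    congr 1
    rw [Finset.sum_filter]
    rw [Finset.sum_eq_single (∅ : Finset (Fin i))]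
    · simp
    · intro I _ hne
      simp [Finset.nonempty_iff_ne_empty.2 hne]
    · simp
  rw [hfil, Finset.sum_powerset]
  have hgroup : ∀ j ∈ Finset.range (Finset.univ.card (α := Fin i) + 1),
      (∑ I ∈ Finset.powersetCard j (Finset.univ : Finset (Fin i)),
        (-1 : ℤ) ^ (I.card + 1) * N (t - (I.card : ℤ) * ℓ))
      = (i.choose j : ℤ) * ((-1 : ℤ) ^ (j + 1) * N (t - (j : ℤ) * ℓ)) := by
    intro j _
    rw [Finset.sum_congr rfl (fun I hI => by
      rw [(Finset.mem_powersetCard.1 hI).2]), Finset.sum_const,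
      Finset.card_powersetCard, Finset.card_univ, Fintype.card_fin, nsmul_eq_mul]
  rw [Finset.sum_congr rfl hgroup]
  simp only [Finset.card_univ, Fintype.card_fin]
  rw [Finset.sum_congr rfl (fun j _ => by ring_nf :
    ∀ j ∈ Finset.range (i + 1), (i.choose j : ℤ) * ((-1 : ℤ) ^ (j + 1) * N (t - (j : ℤ) * ℓ))
      = -((-1 : ℤ) ^ j * (i.choose j : ℤ) * N (t - (j : ℤ) * ℓ)))]
  rw [Finset.sum_neg_distrib]
  have h0 : t - (0 : ℤ) * ℓ = t := by ring
  rw [h0]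
  ring
end

section
/- (Equiabundance) Fix an integer step size ℓ ≥ 1 and an integer K_0 ≥ 1. Suppose N : ℤ → ℚ is ℓ-quasipolynomial of degree K_0 with leading coefficient c_N, m : ℤ → ℚ is ℓ-quasipolynomial of degree 1 (ℓ-quasilinear) with leading coefficient c_m ≠ 0, and s : ℤ → ℚ is ℓ-quasipolynomial of degree K_0 - 1 with leading coefficient c_N / c_m. Then for every t ∈ ℤ, N(t) - (∇^{K_0} N)(t) + K_0·(∇ m)(t)·(∇^{K_0 - 1} s)(t - ℓ) + m(t)·(∇^{K_0} s)(t) = N(t). -/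
/-- The backward difference operator with step size `ℓ`, for `ℚ`-valued functions on `ℤ`. -/
def bdiffQ (ℓ : ℤ) (f : ℤ → ℚ) : ℤ → ℚ := fun t => f t - f (t - ℓ)

/-- `f : ℤ → ℚ` is `ℓ`-quasipolynomial of degree `d` with leading coefficient `a`. -/
def IsQuasiPolyQ (ℓ : ℕ) (d : ℕ) (a : ℚ) (f : ℤ → ℚ) : Prop :=
  ∃ p : ℤ → Polynomial ℚ,
    (∀ r : ℤ, (p r).degree = (d : ℕ) ∧ (p r).leadingCoeff = a) ∧
    ∀ t : ℤ, f t = (p (t % (ℓ : ℤ))).eval (t : ℚ)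

open Polynomial

/-- Polynomial backward difference with step `ℓ`. -/
noncomputable def pbd (ℓ : ℚ) (p : Polynomial ℚ) : Polynomial ℚ :=
  p - p.comp (X - C ℓ)

lemma pbd_coeff (ℓ : ℚ) (p : Polynomial ℚ) (n : ℕ) (h : p.natDegree ≤ n + 1) :
    (pbd ℓ p).coeff n = (n + 1 : ℚ) * p.coeff (n + 1) * ℓ := by
  have hX : X - C ℓ = X + C (-ℓ) := by rw [map_neg]; ring
  have hcomp : p.comp (X - C ℓ) = Polynomial.taylor (-ℓ) p := by
    rw [hX, Polynomial.taylor_apply]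
  have hd : (Polynomial.hasseDeriv n p).natDegree < 2 := by
    have := Polynomial.natDegree_hasseDeriv_le p n
    omega
  have heval : (Polynomial.hasseDeriv n p).eval (-ℓ) =
      (Polynomial.hasseDeriv n p).coeff 0 + (Polynomial.hasseDeriv n p).coeff 1 * (-ℓ) := by
    rw [Polynomial.eval_eq_sum_range' hd]
    simp [Finset.sum_range_succ]
  rw [pbd, Polynomial.coeff_sub, hcomp, Polynomial.taylor_coeff, heval,
    Polynomial.hasseDeriv_coeff, Polynomial.hasseDeriv_coeff]
  simp only [zero_add, Nat.choose_self, Nat.cast_one, one_mul, Nat.add_comm 1 n,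
    Nat.choose_succ_self_right]
  push_cast
  ring

lemma pbd_natDegree_le (ℓ : ℚ) (p : Polynomial ℚ) (d : ℕ) (h : p.natDegree ≤ d + 1) :
    (pbd ℓ p).natDegree ≤ d := by
  rw [Polynomial.natDegree_le_iff_coeff_eq_zero]
  intro m hm
  rw [pbd_coeff ℓ p m (le_trans h (by omega))]
  have : p.coeff (m + 1) = 0 := Polynomial.coeff_eq_zero_of_natDegree_lt (by omega)
  simp [this]

lemma pbd_iter_eval (ℓ : ℚ) : ∀ (d : ℕ) (p : Polynomial ℚ), p.natDegree ≤ d →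
    ∀ x : ℚ, ((pbd ℓ)^[d] p).eval x = p.coeff d * d.factorial * ℓ ^ d := by
  intro d
  induction d with
  | zero =>
    intro p hp x
    obtain ⟨c, rfl⟩ : ∃ c, p = Polynomial.C c := ⟨p.coeff 0, Polynomial.eq_C_of_natDegree_le_zero hp⟩
    simp
  | succ d ih =>
    intro p hp x
    rw [Function.iterate_succ_apply,
      ih (pbd ℓ p) (pbd_natDegree_le ℓ p d hp) x,
      pbd_coeff ℓ p d hp]
    rw [Nat.factorial_succ]
    push_cast
    ring

lemma bdiff_iter_repr (ℓ : ℤ) (i : ℕ) : ∀ (f : ℤ → ℚ) (p : ℤ → Polynomial ℚ),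
    (∀ t : ℤ, f t = (p (t % ℓ)).eval (t : ℚ)) →
    ∀ t : ℤ, (bdiffQ ℓ)^[i] f t = ((pbd (ℓ : ℚ))^[i] (p (t % ℓ))).eval (t : ℚ) := by
  induction i with
  | zero => intro f p hp t; simpa using hp t
  | succ i ih =>
    intro f p hp t
    rw [Function.iterate_succ_apply]
    have key : ∀ u : ℤ, bdiffQ ℓ f u = (pbd (ℓ : ℚ) (p (u % ℓ))).eval (u : ℚ) := by
      intro u
      have hres : (u - ℓ) % ℓ = u % ℓ := by
        rw [Int.sub_emod, Int.emod_self, sub_zero, Int.emod_emod_of_dvd _ dvd_rfl]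
      rw [bdiffQ, pbd, hp u, hp (u - ℓ), hres]
      simp only [Polynomial.eval_sub, Polynomial.eval_comp, Polynomial.eval_X, Polynomial.eval_C]
      push_cast
      ring
    rw [ih (bdiffQ ℓ f) (fun r => pbd (ℓ : ℚ) (p r)) key t,
      ← Function.iterate_succ_apply]

/-- Equiabundance: for the chosen quasipolynomial `s`, the statement `A_{K₀}(t)` is
equiabundant, i.e. `a_{K₀}(t) = N(t)`. -/
theorem equiabundant (ℓ : ℕ) (hℓ : 1 ≤ ℓ) (K₀ : ℕ) (hK : 1 ≤ K₀)
    (N m s : ℤ → ℚ) (cN cm : ℚ) (hcm : cm ≠ 0)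
    (hN : IsQuasiPolyQ ℓ K₀ cN N)
    (hm : IsQuasiPolyQ ℓ 1 cm m)
    (hs : IsQuasiPolyQ ℓ (K₀ - 1) (cN / cm) s) (t : ℤ) :
    N t - (bdiffQ (ℓ : ℤ))^[K₀] N t
      + (K₀ : ℚ) * bdiffQ (ℓ : ℤ) m t * (bdiffQ (ℓ : ℤ))^[K₀ - 1] s (t - (ℓ : ℤ))
      + m t * (bdiffQ (ℓ : ℤ))^[K₀] s t = N t := by
  obtain ⟨pN, hpN, hNval⟩ := hN
  obtain ⟨pm, hpm, hmval⟩ := hm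
  obtain ⟨ps, hps, hsval⟩ := hs
  -- degree facts
  have hpNdeg : ∀ r, (pN r).natDegree = K₀ := fun r =>
    Polynomial.natDegree_eq_of_degree_eq_some (hpN r).1
  have hpmdeg : ∀ r, (pm r).natDegree = 1 := fun r =>
    Polynomial.natDegree_eq_of_degree_eq_some (hpm r).1
  have hpsdeg : ∀ r, (ps r).natDegree = K₀ - 1 := fun r =>
    Polynomial.natDegree_eq_of_degree_eq_some (hps r).1
  have hpNc : ∀ r, (pN r).coeff K₀ = cN := fun r => by
    have := (hpN r).2; rwa [Polynomial.leadingCoeff, hpNdeg r] at this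
  have hpmc : ∀ r, (pm r).coeff 1 = cm := fun r => by
    have := (hpm r).2; rwa [Polynomial.leadingCoeff, hpmdeg r] at this
  have hpsc : ∀ r, (ps r).coeff (K₀ - 1) = cN / cm := fun r => by
    have := (hps r).2; rwa [Polynomial.leadingCoeff, hpsdeg r] at this
  -- value computations
  have hA : (bdiffQ (ℓ : ℤ))^[K₀] N t = cN * K₀.factorial * (ℓ : ℚ) ^ K₀ := by
    rw [bdiff_iter_repr (ℓ : ℤ) K₀ N pN hNval t,
      pbd_iter_eval ((ℓ : ℤ) : ℚ) K₀ _ (le_of_eq (hpNdeg _)) _, hpNc]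
    push_cast
    ring
  have hB : bdiffQ (ℓ : ℤ) m t = cm * (ℓ : ℚ) := by
    have := bdiff_iter_repr (ℓ : ℤ) 1 m pm hmval t
    rw [Function.iterate_one] at this
    rw [this, pbd_iter_eval ((ℓ : ℤ) : ℚ) 1 _ (le_of_eq (hpmdeg _)) _, hpmc]
    norm_num [Nat.factorial]
  have hC : (bdiffQ (ℓ : ℤ))^[K₀ - 1] s (t - (ℓ : ℤ))
      = (cN / cm) * (K₀ - 1).factorial * (ℓ : ℚ) ^ (K₀ - 1) := by
    rw [bdiff_iter_repr (ℓ : ℤ) (K₀ - 1) s ps hsval (t - (ℓ : ℤ)),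
      pbd_iter_eval ((ℓ : ℤ) : ℚ) (K₀ - 1) _ (le_of_eq (hpsdeg _)) _, hpsc]
    push_cast
    ring
  have hD : (bdiffQ (ℓ : ℤ))^[K₀] s t = 0 := by
    rw [bdiff_iter_repr (ℓ : ℤ) K₀ s ps hsval t,
      pbd_iter_eval ((ℓ : ℤ) : ℚ) K₀ _ (by rw [hpsdeg]; omega) _]
    have : (ps (t % (ℓ : ℤ))).coeff K₀ = 0 :=
      Polynomial.coeff_eq_zero_of_natDegree_lt (by rw [hpsdeg]; omega)
    simp [this]
  rw [hA, hB, hC, hD]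
  have hfac : (K₀.factorial : ℚ) = K₀ * (K₀ - 1).factorial := by
    conv_lhs => rw [show K₀ = (K₀ - 1) + 1 by omega]
    rw [Nat.factorial_succ]
    push_cast
    have : ((K₀ - 1 : ℕ) : ℚ) + 1 = K₀ := by
      have : (K₀ - 1) + 1 = K₀ := by omega
      exact_mod_cast congrArg (Nat.cast : ℕ → ℚ) this
    rw [this]
  have hpow : (ℓ : ℚ) ^ K₀ = (ℓ : ℚ) ^ (K₀ - 1) * ℓ := by
    rw [← pow_succ, show K₀ - 1 + 1 = K₀ by omega]
  rw [hfac, hpow]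
  field_simp
  ring
end

section
/- (The 27-quasiquadratic formula computes the critical number of points for quaternary forms) Define a : ℕ → ℤ by a(t) = a(r) where r is the remainder of t modulo 27 and the values a(r) for r = 0, 1, …, 26 are, in order: 0, -10, 4, -12, -4, 1, 3, 2, -2, -9, 8, -5, 6, -13, -8, -6, -7, -11, 9, -1, 13, -3, 5, 10, 12, 11, 7. Then for every natural number t: (i) 54 divides 3t² + 17t + 2a(t), so that s₁(t) := (3t² + 17t + 2a(t))/54 is an integer; and (ii) s₁(t) + 1 = ⌈C(t+3, 3) / (3t + 1)⌉. -/
/-- The values `a(0), a(1), …, a(26)` from Table 3. -/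
def aVals : List ℤ :=
  [0, -10, 4, -12, -4, 1, 3, 2, -2, -9, 8, -5, 6, -13, -8, -6, -7, -11, 9, -1,
   13, -3, 5, 10, 12, 11, 7]

/-- `a(t)` depends only on the remainder of `t` modulo 27. -/
def aQ (t : ℕ) : ℤ := aVals.getD (t % 27) 0

lemma ch2 (n : ℕ) : 2 * (n+2).choose 2 = (n+1)*(n+2) := by
  induction n with
  | zero => rfl
  | succ k ih =>
    rw [show k+1+2 = (k+2)+1 from rfl, Nat.choose_succ_succ, Nat.mul_add, ih,
      Nat.choose_one_right]
    ring

lemma ch3 (n : ℕ) : 6 * (n+3).choose 3 = (n+1)*(n+2)*(n+3) := by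
  induction n with
  | zero => rfl
  | succ k ih =>
    rw [show k+1+3 = (k+3)+1 from rfl, Nat.choose_succ_succ, Nat.mul_add, ih]
    have h2 := ch2 (k+1)
    nlinarith [h2]

lemma hbound : ∀ r < 27, -13 ≤ aQ r ∧ aQ r ≤ 13 ∧ 0 ≤ (40 + 3 * aQ r) * r + aQ r := by decide

lemma hdvd54 : ∀ r : ℕ, r < 54 → (3*(r:ℤ)^2 + 17*(r:ℤ) + 2*aQ r) % 54 = 0 := by decide

lemma aQ_eq_of_mod (s t : ℕ) (h : s % 27 = t % 27) : aQ s = aQ t := by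
  unfold aQ; rw [h]

/-- The 27-quasiquadratic formula computes the critical number of points for
quaternary forms: `s₁(t) = (3t² + 17t + 2a(t))/54` is an integer and
`s₁(t) + 1 = ⌈C(t+3,3)/(3t+1)⌉`. -/
theorem quaternary_critical_value (t : ℕ) :
    (54 : ℤ) ∣ (3 * (t : ℤ) ^ 2 + 17 * (t : ℤ) + 2 * aQ t) ∧
    (3 * (t : ℤ) ^ 2 + 17 * (t : ℤ) + 2 * aQ t) / 54 + 1
      = ⌈(((t + 3).choose 3 : ℚ)) / (3 * (t : ℚ) + 1)⌉ := by
  set v : ℤ := aQ t with hv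
  -- bounds on v
  obtain ⟨hb1, hb2, hb3⟩ := hbound (t % 27) (Nat.mod_lt _ (by norm_num))
  have hveq : aQ (t % 27) = v := aQ_eq_of_mod _ _ (by omega)
  rw [hveq] at hb1 hb2 hb3
  -- divisibility
  have hd : (54 : ℤ) ∣ (3 * (t : ℤ) ^ 2 + 17 * (t : ℤ) + 2 * v) := by
    have h1 := hdvd54 (t % 54) (Nat.mod_lt _ (by norm_num))
    have hveq2 : aQ (t % 54) = v := aQ_eq_of_mod _ _ (by omega)
    rw [hveq2] at h1
    have ht : (t : ℤ) = 54 * (t / 54 : ℕ) + (t % 54 : ℕ) := by push_cast; omega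
    have heq : (3 * (t : ℤ) ^ 2 + 17 * (t : ℤ) + 2 * v)
        = (3 * ((t % 54 : ℕ) : ℤ) ^ 2 + 17 * ((t % 54 : ℕ) : ℤ) + 2 * v)
          + 54 * (162 * ((t / 54 : ℕ) : ℤ) ^ 2
            + 6 * ((t / 54 : ℕ) : ℤ) * ((t % 54 : ℕ) : ℤ) + 17 * ((t / 54 : ℕ) : ℤ)) := by
      linear_combination (3 * (t : ℤ) + 3 * ((t % 54 : ℕ) : ℤ) + 162 * ((t / 54 : ℕ) : ℤ) + 17) * ht
    rw [heq]
    exact dvd_add (Int.dvd_of_emod_eq_zero h1) (Dvd.intro _ rfl)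
  refine ⟨hd, ?_⟩
  obtain ⟨k, hk⟩ := hd
  have hks : (3 * (t : ℤ) ^ 2 + 17 * (t : ℤ) + 2 * v) / 54 = k := by
    rw [hk]; exact Int.mul_ediv_cancel_left _ (by norm_num)
  rw [hks]
  symm
  rw [Int.ceil_eq_iff]
  have hpos : (0 : ℚ) < 3 * (t : ℚ) + 1 := by positivity
  have hCq : 6 * (((t + 3).choose 3 : ℚ)) = ((t : ℚ) + 1) * ((t : ℚ) + 2) * ((t : ℚ) + 3) := by
    exact_mod_cast congrArg (Nat.cast : ℕ → ℚ) (ch3 t)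
  have hkq : 3 * (t : ℚ) ^ 2 + 17 * (t : ℚ) + 2 * (v : ℚ) = 54 * (k : ℚ) := by
    exact_mod_cast congrArg (Int.cast : ℤ → ℚ) hk
  have hb1q : (-13 : ℚ) ≤ (v : ℚ) := by exact_mod_cast hb1
  have hb2q : (v : ℚ) ≤ 13 := by exact_mod_cast hb2
  have hb4 : (0 : ℤ) ≤ (40 + 3 * v) * (t : ℤ) + v := by
    have hmle : ((t % 27 : ℕ) : ℤ) ≤ (t : ℤ) := by exact_mod_cast Nat.mod_le t 27
    nlinarith [hb3, hb1, hmle]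
  have hb4q : (0 : ℚ) ≤ (40 + 3 * (v : ℚ)) * (t : ℚ) + (v : ℚ) := by exact_mod_cast hb4
  have hmle : ((t % 27 : ℕ) : ℚ) ≤ (t : ℚ) := by exact_mod_cast Nat.mod_le t 27
  have htn : (0 : ℚ) ≤ (t : ℚ) := by positivity
  have key1 : 324 * (((t + 3).choose 3 : ℚ)) - 324 * (k : ℚ) * (3 * (t : ℚ) + 1)
      = 12 * ((41 - 3 * (v : ℚ)) * (t : ℚ) + 27 - (v : ℚ)) := by
    linear_combination 54 * hCq + 6 * (3 * (t : ℚ) + 1) * hkq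
  have key2 : 324 * ((k : ℚ) + 1) * (3 * (t : ℚ) + 1) - 324 * (((t + 3).choose 3 : ℚ))
      = 12 * ((40 + 3 * (v : ℚ)) * (t : ℚ) + (v : ℚ)) := by
    linear_combination (-54) * hCq - 6 * (3 * (t : ℚ) + 1) * hkq
  constructor
  · rw [lt_div_iff₀ hpos]
    push_cast
    nlinarith [mul_nonneg (show (0:ℚ) ≤ 41 - 3*(v:ℚ) by linarith) htn]
  · rw [div_le_iff₀ hpos]
    push_cast
    nlinarith [hb4q]
end

section
/- (Pairwise intersections of the tangent-space summands of the Chow variety) Let k be a field, n ≥ 1, d ≥ 2, and let ℓ_1, …, ℓ_d be nonzero homogeneous polynomials of degree 1 in k[x_0,…,x_n] that are pairwise non-proportional (ℓ_i is not a scalar multiple of ℓ_j for i ≠ j). Let L denote the subspace of homogeneous polynomials of degree 1. Then for all j ≠ k in {1,…,d}, the intersection of the subspaces (∏_{i≠j} ℓ_i)·L and (∏_{i≠k} ℓ_i)·L of the degree-d homogeneous component equals the one-dimensional subspace spanned by ℓ_1·ℓ_2·⋯·ℓ_d. -/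
open MvPolynomial


section aux
variable {σ : Type*} {R : Type*}

lemma aux_eq_C {R : Type*} [CommSemiring R] {p : MvPolynomial σ R}
    (h : p.totalDegree = 0) : p = C (coeff 0 p) := by
  classical
  ext d
  by_cases hd : d = 0
  · simp [hd]
  · rw [MvPolynomial.totalDegree_eq_zero_iff] at h
    have : coeff d p = 0 := by
      by_contra hc
      obtain ⟨x, hx⟩ := Finsupp.ne_iff.mp hd
      exact hx (by simpa using h d (by simpa [MvPolynomial.mem_support_iff] using hc) x)
    rw [this, coeff_C, if_neg (fun h => hd h.symm)]

variable [CommRing R]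

lemma aux_comp_ne {p : MvPolynomial σ R} (hp : p ≠ 0) :
    homogeneousComponent p.totalDegree p ≠ 0 := by
  obtain ⟨d, hd, hdeg⟩ := Finset.exists_mem_eq_sup p.support
    (Finset.nonempty_iff_ne_empty.mpr (mt MvPolynomial.support_eq_empty.mp hp)) (fun m : σ →₀ ℕ => m.degree)
  have hdd : d.degree = p.totalDegree := by
    rw [← hdeg]; simp [MvPolynomial.totalDegree, Finsupp.degree_apply, Finsupp.sum]
  intro h
  have := congrArg (coeff d) h
  rw [coeff_homogeneousComponent, if_pos hdd] at this
  exact (MvPolynomial.mem_support_iff.mp hd) (by simpa using this)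


variable [IsDomain R]

lemma aux_tdeg_mul {p q : MvPolynomial σ R} (hp : p ≠ 0) (hq : q ≠ 0) :
    (p * q).totalDegree = p.totalDegree + q.totalDegree := by
  classical
  set s := p.totalDegree with hs
  set t := q.totalDegree with ht
  refine le_antisymm (totalDegree_mul p q) ?_
  by_contra hlt
  push_neg at hlt
  letI : GradedAlgebra (homogeneousSubmodule σ R) := MvPolynomial.gradedAlgebra
  have hdec : ∀ (r : MvPolynomial σ R) (i : ℕ),
      ((DirectSum.decompose (homogeneousSubmodule σ R) r) i : MvPolynomial σ R) =
        homogeneousComponent i r := fun r i => MvPolynomial.decomposition.decompose'_apply r i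
  have hle : ∀ (r : MvPolynomial σ R) (i : ℕ),
      (DirectSum.decompose (homogeneousSubmodule σ R) r) i ≠ 0 → i ≤ r.totalDegree := by
    intro r i hi
    by_contra hgt
    push_neg at hgt
    apply hi
    have : homogeneousComponent i r = 0 := homogeneousComponent_eq_zero _ _ hgt
    ext
    rw [hdec, this, Submodule.coe_zero]
  have hdm := congrArg (fun x : DirectSum ℕ (fun i => ↥(homogeneousSubmodule σ R i)) =>
      (x (s + t) : MvPolynomial σ R))
    (DirectSum.decompose_mul (𝒜 := homogeneousSubmodule σ R) p q)
  simp only at hdm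
  rw [hdec, DirectSum.coe_mul_apply] at hdm
  have hmem : (s, t) ∈ (((DirectSum.decompose (homogeneousSubmodule σ R) p).support ×ˢ
      (DirectSum.decompose (homogeneousSubmodule σ R) q).support).filter
        (fun ij : ℕ × ℕ => ij.1 + ij.2 = s + t)) := by
    rw [Finset.mem_filter, Finset.mem_product]
    refine ⟨⟨?_, ?_⟩, rfl⟩
    · rw [DFinsupp.mem_support_iff]
      intro h0
      exact aux_comp_ne hp (by rw [← hdec p s, h0, Submodule.coe_zero])
    · rw [DFinsupp.mem_support_iff]
      intro h0
      exact aux_comp_ne hq (by rw [← hdec q t, h0, Submodule.coe_zero])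
  rw [Finset.sum_eq_single (s, t)
      (by
        rintro ⟨i, j⟩ hb hne
        rw [Finset.mem_filter, Finset.mem_product] at hb
        obtain ⟨⟨h1, h2⟩, h3⟩ := hb
        have hi := hle p i (DFinsupp.mem_support_iff.mp h1)
        have hj := hle q j (DFinsupp.mem_support_iff.mp h2)
        have hieq : i = s := by omega
        have hjeq : j = t := by omega
        exact absurd (by rw [hieq, hjeq]) hne)
      (fun h => absurd hmem h)] at hdm
  rw [hdec p, hdec q] at hdm
  have hzero : homogeneousComponent (s + t) (p * q) = 0 :=
    homogeneousComponent_eq_zero _ _ hlt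
  rw [hzero] at hdm
  exact mul_ne_zero (aux_comp_ne hp) (aux_comp_ne hq) hdm.symm

end aux

lemma aux_prime {σ : Type*} {k : Type*} [Field k] {a : MvPolynomial σ k}
    (ha : a.IsHomogeneous 1) (h0 : a ≠ 0) : Prime a := by
  rw [← UniqueFactorizationMonoid.irreducible_iff_prime]
  constructor
  · intro hu
    obtain ⟨v, hv⟩ := hu.exists_right_inv
    have hv0 : v ≠ 0 := by rintro rfl; simp at hv
    have h1 := aux_tdeg_mul h0 hv0
    rw [hv, totalDegree_one, ha.totalDegree h0] at h1
    omega
  · rintro p q hpq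
    have hp0 : p ≠ 0 := by rintro rfl; rw [zero_mul] at hpq; exact h0 hpq
    have hq0 : q ≠ 0 := by rintro rfl; rw [mul_zero] at hpq; exact h0 hpq
    have h1 := aux_tdeg_mul hp0 hq0
    rw [← hpq, ha.totalDegree h0] at h1
    have : p.totalDegree = 0 ∨ q.totalDegree = 0 := by omega
    rcases this with h | h
    · left
      rw [aux_eq_C h]
      refine (isUnit_iff_ne_zero.mpr ?_).map (C : k →+* MvPolynomial σ k)
      intro hc
      exact hp0 (by rw [aux_eq_C h, hc, map_zero])
    · right
      rw [aux_eq_C h]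
      refine (isUnit_iff_ne_zero.mpr ?_).map (C : k →+* MvPolynomial σ k)
      intro hc
      exact hq0 (by rw [aux_eq_C h, hc, map_zero])


/-- Pairwise intersections of the tangent-space summands of the Chow variety:
for pairwise non-proportional nonzero linear forms `ℓ_1, …, ℓ_d`, the subspaces
`(∏_{i≠j} ℓ_i)·L` and `(∏_{i≠k} ℓ_i)·L` intersect exactly in the line spanned
by `ℓ_1 ⋯ ℓ_d`. -/
theorem chow_tangent_summand_intersections
    {k : Type*} [Field k] (n d : ℕ) (hn : 1 ≤ n) (hd : 2 ≤ d)
    (l : Fin d → MvPolynomial (Fin (n + 1)) k)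
    (hne : ∀ i, l i ≠ 0)
    (hhom : ∀ i, (l i).IsHomogeneous 1)
    (hprop : ∀ i j, i ≠ j → ∀ c : k, l i ≠ c • l j) :
    ∀ j j' : Fin d, j ≠ j' →
      Submodule.map (LinearMap.mulLeft k (∏ i ∈ Finset.univ.erase j, l i))
          (MvPolynomial.homogeneousSubmodule (Fin (n + 1)) k 1) ⊓
        Submodule.map (LinearMap.mulLeft k (∏ i ∈ Finset.univ.erase j', l i))
          (MvPolynomial.homogeneousSubmodule (Fin (n + 1)) k 1)
      = Submodule.span k {∏ i, l i} := by
  intro j j' hjj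
  have hj'mem : j' ∈ Finset.univ.erase j :=
    Finset.mem_erase.mpr ⟨hjj.symm, Finset.mem_univ _⟩
  have hjmem : j ∈ Finset.univ.erase j' :=
    Finset.mem_erase.mpr ⟨hjj, Finset.mem_univ _⟩
  have h1 : (∏ i ∈ Finset.univ.erase j, l i)
      = l j' * ∏ i ∈ (Finset.univ.erase j).erase j', l i :=
    (Finset.mul_prod_erase _ _ hj'mem).symm
  have h2 : (∏ i ∈ Finset.univ.erase j', l i)
      = l j * ∏ i ∈ (Finset.univ.erase j).erase j', l i := by
    rw [Finset.erase_right_comm]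
    exact (Finset.mul_prod_erase _ _ hjmem).symm
  have hgne : (∏ i ∈ (Finset.univ.erase j).erase j', l i) ≠ 0 :=
    Finset.prod_ne_zero_iff.mpr fun i _ => hne i
  apply le_antisymm
  · rintro p ⟨hp1, hp2⟩
    obtain ⟨v, hv, hpv⟩ := Submodule.mem_map.mp hp1
    obtain ⟨w, hw, hpw⟩ := Submodule.mem_map.mp hp2
    rw [LinearMap.mulLeft_apply] at hpv hpw
    have hkey : l j' * v = l j * w := by
      apply mul_right_cancel₀ hgne
      have h3 := hpv.trans hpw.symm
      rw [h1, h2] at h3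
      linear_combination h3
    have hprime : Prime (l j) := aux_prime (hhom j) (hne j)
    rcases hprime.2.2 (l j') v ⟨w, hkey⟩ with hcase | hcase
    · exfalso
      obtain ⟨u, hu⟩ := hcase
      have hu0 : u ≠ 0 := by rintro rfl; rw [mul_zero] at hu; exact hne j' hu
      have h3 := aux_tdeg_mul (hne j) hu0
      rw [← hu, (hhom j').totalDegree (hne j'), (hhom j).totalDegree (hne j)] at h3
      have h4 : u.totalDegree = 0 := by omega
      refine hprop j' j hjj.symm (coeff 0 u) ?_
      rw [hu, aux_eq_C h4, smul_eq_C_mul]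
      simp only [MvPolynomial.coeff_zero_C]
      ring
    · obtain ⟨u, hu⟩ := hcase
      by_cases hv0 : v = 0
      · rw [← hpv, hv0, mul_zero]
        exact zero_mem _
      · have hu0 : u ≠ 0 := by rintro rfl; rw [mul_zero] at hu; exact hv0 hu
        have h3 := aux_tdeg_mul (hne j) hu0
        have hv1 : v.totalDegree = 1 :=
          ((mem_homogeneousSubmodule 1 v).mp hv).totalDegree hv0
        rw [← hu, hv1, (hhom j).totalDegree (hne j)] at h3
        have h4 : u.totalDegree = 0 := by omega
        refine Submodule.mem_span_singleton.mpr ⟨coeff 0 u, ?_⟩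
        rw [← hpv, hu, aux_eq_C h4, smul_eq_C_mul,
          ← Finset.prod_erase_mul Finset.univ l (Finset.mem_univ j)]
        simp only [MvPolynomial.coeff_zero_C]
        ring
  · rw [Submodule.span_le, Set.singleton_subset_iff]
    refine ⟨?_, ?_⟩
    · exact Submodule.mem_map.mpr ⟨l j, (mem_homogeneousSubmodule 1 (l j)).mpr (hhom j),
        by rw [LinearMap.mulLeft_apply, Finset.prod_erase_mul _ _ (Finset.mem_univ j)]⟩
    · exact Submodule.mem_map.mpr ⟨l j', (mem_homogeneousSubmodule 1 (l j')).mpr (hhom j'),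
        by rw [LinearMap.mulLeft_apply, Finset.prod_erase_mul _ _ (Finset.mem_univ j')]⟩
end
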